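/- arXiv:1901.08434 — 4 statements merged into one kernel-verified Lean document; each statement's English description precedes it below -/
import Mathlib

section
/- Let (X_t)_{t≥1} be an i.i.d. sequence of nonnegative integrable real-valued random variables, let ν > 0 and γ > 1 satisfy P(X_1 ≥ ν) = 1/γ, and set β = E[X_1·1{X_1 ≥ ν}]. Then for every stopping time T of the natural filtration of (X_t) with γ ≤ E[T] < ∞, one has E[X_T] ≤ β·E[T]. -/
open MeasureTheory ProbabilityTheory

/-- The natural filtration `𝓕_t = σ(X_1, …, X_t)` of a process indexed from `1`. -/
def natFiltration {Ω : Type*} [MeasurableSpace Ω] (X : ℕ → Ω → ℝ) (t : ℕ) :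
    MeasurableSpace Ω :=
  ⨆ s ∈ Set.Icc 1 t, MeasurableSpace.comap (X s) inferInstance

private lemma aux_tsum_nat (k : ℕ) :
    ∑' t : ℕ, (if t + 1 ≤ k then (1 : ENNReal) else 0) = k := by
  rw [tsum_eq_sum (s := Finset.range k)
    (fun t ht => by
      rw [if_neg]
      simp only [Finset.mem_range, not_lt] at ht
      omega)]
  rw [Finset.sum_congr rfl (fun t ht => if_pos (by
    simp only [Finset.mem_range] at ht; omega))]
  simp

/-- If `(X_t)_{t≥1}` is an i.i.d. sequence of nonnegative integrable random variables,
`ν > 0` and `γ > 1` satisfy `P(X_1 ≥ ν) = 1/γ`, and `β = E[X_1·1{X_1 ≥ ν}]`, then every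
stopping time `T` of the natural filtration with `γ ≤ E[T] < ∞` satisfies
`E[X_T] ≤ β·E[T]`. -/
theorem stmt_0
    {Ω : Type*} [MeasurableSpace Ω] (P : Measure Ω) [IsProbabilityMeasure P]
    (X : ℕ → Ω → ℝ)
    (hmeas : ∀ t, 1 ≤ t → Measurable (X t))
    (hindep : iIndepFun
      (fun i : {n : ℕ // 1 ≤ n} => X i.1) P)
    (hident : ∀ t, 1 ≤ t → IdentDistrib (X t) (X 1) P P)
    (hnonneg : ∀ t, 1 ≤ t → ∀ ω, 0 ≤ X t ω)
    (hint : ∀ t, 1 ≤ t → Integrable (X t) P)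
    (ν γ : ℝ) (hν : 0 < ν) (hγ : 1 < γ)
    (hthresh : P {ω | ν ≤ X 1 ω} = ENNReal.ofReal (1 / γ))
    (T : Ω → ℕ)
    (hT1 : ∀ ω, 1 ≤ T ω)
    (hTstop : ∀ t, MeasurableSet[natFiltration X t] {ω | T ω = t})
    (hTint : Integrable (fun ω => (T ω : ℝ)) P)
    (hTγ : γ ≤ ∫ ω, (T ω : ℝ) ∂P) :
    ∫ ω, X (T ω) ω ∂P ≤ (∫ ω in {ω | ν ≤ X 1 ω}, X 1 ω ∂P) * ∫ ω, (T ω : ℝ) ∂P := by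
  classical
  set A : Set Ω := {ω | ν ≤ X 1 ω} with hAdef
  set β : ℝ := ∫ ω in A, X 1 ω ∂P with hβdef
  set Eτ : ℝ := ∫ ω, (T ω : ℝ) ∂P with hEτdef
  have hγ0 : (0:ℝ) < γ := lt_trans one_pos hγ
  have hEτpos : (0:ℝ) < Eτ := lt_of_lt_of_le hγ0 hTγ
  have hA : MeasurableSet A := measurableSet_le measurable_const (hmeas 1 le_rfl)
  have hpAr : (P A).toReal = 1 / γ := by
    rw [hthresh, ENNReal.toReal_ofReal (by positivity)]
  -- the function g x = (x - ν)⁺-ish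
  set g : ℝ → ℝ := fun x => if ν ≤ x then x - ν else 0 with hgdef
  have hgm : Measurable g := by
    apply Measurable.ite (measurableSet_le measurable_const measurable_id)
    · exact measurable_id.sub measurable_const
    · exact measurable_const
  have hg0 : ∀ x, 0 ≤ g x := by
    intro x; simp only [hgdef]
    split
    · linarith
    · exact le_rfl
  -- value of ∫ g(X 1)
  have hgind : (fun ω => g (X 1 ω)) = A.indicator (fun ω => X 1 ω - ν) := by
    funext ω
    simp only [Set.indicator_apply, hAdef, Set.mem_setOf_eq, hgdef]
  have hgint : Integrable (fun ω => g (X 1 ω)) P := by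
    rw [hgind]
    exact ((hint 1 le_rfl).sub (integrable_const ν)).indicator hA
  set c : ℝ := β - ν / γ with hcdef
  have hgval : ∫ ω, g (X 1 ω) ∂P = c := by
    rw [hgind, integral_indicator hA,
      integral_sub ((hint 1 le_rfl).integrableOn)
        (integrableOn_const (measure_ne_top P A)),
      setIntegral_const, measureReal_def, hpAr]
    simp only [hcdef, hβdef, smul_eq_mul]
    ring
  have hc0 : 0 ≤ c := by
    rw [← hgval]
    exact integral_nonneg fun ω => hg0 _
  have hβ0 : 0 ≤ β := setIntegral_nonneg hA fun ω _ => hnonneg 1 le_rfl ω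
  have hlg : ∫⁻ ω, ENNReal.ofReal (g (X 1 ω)) ∂P = ENNReal.ofReal c := by
    rw [← MeasureTheory.ofReal_integral_eq_lintegral_ofReal hgint
      (Filter.Eventually.of_forall fun ω => hg0 _), hgval]
  -- filtration facts
  have hfil_le : ∀ t, natFiltration X t ≤ ‹MeasurableSpace Ω› := by
    intro t
    apply iSup₂_le
    intro s hs
    exact measurable_iff_comap_le.mp (hmeas s hs.1)
  have hfil_mono : ∀ {s t : ℕ}, s ≤ t → natFiltration X s ≤ natFiltration X t := by
    intro s t hst
    apply iSup₂_le
    intro u hu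
    exact le_iSup₂ (f := fun u (_ : u ∈ Set.Icc 1 t) => MeasurableSpace.comap (X u) inferInstance)
      u ⟨hu.1, le_trans hu.2 hst⟩
  have hTmeas : Measurable T := by
    apply measurable_to_countable'
    intro t
    exact hfil_le t _ (hTstop t)
  have hTsetF : ∀ t, MeasurableSet[natFiltration X t] {ω | t + 1 ≤ T ω} := by
    intro t
    have heq : {ω | t + 1 ≤ T ω} = (⋃ s ∈ Finset.range (t+1), {ω | T ω = s})ᶜ := by
      ext ω
      simp only [Set.mem_compl_iff, Set.mem_iUnion, Set.mem_setOf_eq, Finset.mem_range,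
        Finset.mem_coe, exists_prop]
      constructor
      · rintro h ⟨s, hs, rfl⟩; omega
      · intro h; by_contra hc; exact h ⟨T ω, by omega, rfl⟩
    rw [heq]
    apply MeasurableSet.compl
    apply MeasurableSet.biUnion ((Finset.range (t+1) : Finset ℕ) : Set ℕ).to_countable
    intro s hs
    simp only [Finset.mem_coe, Finset.mem_range] at hs
    exact hfil_mono (by omega) _ (hTstop s)
  have hTset : ∀ t : ℕ, MeasurableSet {ω | t + 1 ≤ T ω} := fun t => hfil_le t _ (hTsetF t)
  -- independence of 𝓕_t and σ(X_{t+1})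
  have hIndep : ∀ t : ℕ, Indep (natFiltration X t)
      (MeasurableSpace.comap (X (t+1)) inferInstance) P := by
    intro t
    have h_le : ∀ i : {n : ℕ // 1 ≤ n},
        MeasurableSpace.comap (X i.1) inferInstance ≤ ‹MeasurableSpace Ω› :=
      fun i => measurable_iff_comap_le.mp (hmeas i.1 i.2)
    have h := indep_biSup_compl h_le hindep {i : {n : ℕ // 1 ≤ n} | i.1 ≤ t}
    apply indep_of_indep_of_le_left (indep_of_indep_of_le_right h ?_) ?_
    · exact le_iSup₂ (f := fun (i : {n : ℕ // 1 ≤ n})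
        (_ : i ∈ {i : {n : ℕ // 1 ≤ n} | i.1 ≤ t}ᶜ) =>
          MeasurableSpace.comap (X i.1) inferInstance)
        ⟨t+1, by omega⟩ (by simp)
    · apply iSup₂_le
      intro s hs
      exact le_iSup₂ (f := fun (i : {n : ℕ // 1 ≤ n})
        (_ : i ∈ {i : {n : ℕ // 1 ≤ n} | i.1 ≤ t}) =>
          MeasurableSpace.comap (X i.1) inferInstance)
        ⟨s, hs.1⟩ hs.2
  -- the summands
  set h : ℕ → Ω → ENNReal := fun t ω =>
    Set.indicator {ω' | t + 1 ≤ T ω'} (1 : Ω → ENNReal) ω * ENNReal.ofReal (g (X (t+1) ω))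
    with hhdef
  have hhmeas : ∀ t, Measurable (h t) := by
    intro t
    exact ((measurable_const.indicator (hTset t))).mul
      (ENNReal.measurable_ofReal.comp (hgm.comp (hmeas (t+1) (by omega))))
  -- value of ∫⁻ h t
  have hhval : ∀ t, ∫⁻ ω, h t ω ∂P = P {ω' | t + 1 ≤ T ω'} * ENNReal.ofReal c := by
    intro t
    have hkey := lintegral_mul_eq_lintegral_mul_lintegral_of_independent_measurableSpace
      (μ := P)
      (f := fun ω => Set.indicator {ω' | t + 1 ≤ T ω'} (1 : Ω → ENNReal) ω)
      (g := fun ω => ENNReal.ofReal (g (X (t+1) ω)))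
      (hfil_le t) (measurable_iff_comap_le.mp (hmeas (t+1) (by omega))) (hIndep t)
      (measurable_const.indicator (hTsetF t))
      ((ENNReal.measurable_ofReal.comp hgm).comp (Measurable.of_comap_le le_rfl))
    simp only [hhdef]
    rw [hkey]
    congr 1
    · simpa using lintegral_indicator_one (hTset t)
    have hid : IdentDistrib (fun ω => ENNReal.ofReal (g (X (t+1) ω)))
        (fun ω => ENNReal.ofReal (g (X 1 ω))) P P :=
      (hident (t+1) (by omega)).comp (ENNReal.measurable_ofReal.comp hgm)
    rw [hid.lintegral_eq, hlg]
  -- pointwise bound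
  have hpt : ∀ ω, ENNReal.ofReal (X (T ω) ω) ≤ ENNReal.ofReal ν + ∑' t, h t ω := by
    intro ω
    obtain ⟨k, hk⟩ : ∃ k, T ω = k + 1 := ⟨T ω - 1, by have := hT1 ω; omega⟩
    have hterm : ENNReal.ofReal (g (X (T ω) ω)) ≤ ∑' t, h t ω := by
      have h1 : h k ω = ENNReal.ofReal (g (X (T ω) ω)) := by
        simp only [hhdef]
        rw [Set.indicator_of_mem (by simp [hk]), Pi.one_apply, one_mul, hk]
      calc ENNReal.ofReal (g (X (T ω) ω)) = h k ω := h1.symm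
        _ ≤ ∑' t, h t ω := ENNReal.le_tsum k
    refine le_trans ?_ (add_le_add le_rfl hterm)
    by_cases hcase : ν ≤ X (T ω) ω
    · have hg' : g (X (T ω) ω) = X (T ω) ω - ν := by simp [hgdef, hcase]
      rw [hg', ← ENNReal.ofReal_add (le_of_lt hν) (by linarith)]
      apply ENNReal.ofReal_le_ofReal; linarith
    · exact le_trans (ENNReal.ofReal_le_ofReal (le_of_lt (not_le.mp hcase)))
        (le_add_right le_rfl)
  -- sum of tail probabilities equals expectation of T
  have hsumT : ∑' t : ℕ, P {ω' | t + 1 ≤ T ω'} = ENNReal.ofReal Eτ := by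
    have h1 : ∀ t : ℕ, P {ω' | t + 1 ≤ T ω'}
        = ∫⁻ ω, Set.indicator {ω' | t + 1 ≤ T ω'} (1 : Ω → ENNReal) ω ∂P := by
      intro t; rw [lintegral_indicator_one (hTset t)]
    simp_rw [h1]
    rw [← lintegral_tsum (f := fun (t : ℕ) (ω : Ω) => Set.indicator {ω' | t + 1 ≤ T ω'} (1 : Ω → ENNReal) ω)
      (fun t => (measurable_const.indicator (hTset t)).aemeasurable)]
    have h2 : ∀ ω, ∑' t : ℕ, Set.indicator {ω' | t + 1 ≤ T ω'} (1 : Ω → ENNReal) ω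
        = ((T ω : ℕ) : ENNReal) := by
      intro ω
      simp only [Set.indicator_apply, Set.mem_setOf_eq, Pi.one_apply]
      exact aux_tsum_nat (T ω)
    simp_rw [h2]
    have h3 : ∀ ω : Ω, ((T ω : ℕ) : ENNReal) = ENNReal.ofReal ((T ω : ℕ) : ℝ) :=
      fun ω => (ENNReal.ofReal_natCast _).symm
    simp_rw [h3]
    rw [← MeasureTheory.ofReal_integral_eq_lintegral_ofReal hTint
      (Filter.Eventually.of_forall fun ω => Nat.cast_nonneg _)]
  -- main lintegral bound
  have hmain : ∫⁻ ω, ENNReal.ofReal (X (T ω) ω) ∂P ≤ ENNReal.ofReal (β * Eτ) := by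
    calc ∫⁻ ω, ENNReal.ofReal (X (T ω) ω) ∂P
        ≤ ∫⁻ ω, (ENNReal.ofReal ν + ∑' t, h t ω) ∂P := lintegral_mono hpt
      _ = ENNReal.ofReal ν + ∫⁻ ω, ∑' t, h t ω ∂P := by
          rw [lintegral_add_left measurable_const, lintegral_const, measure_univ, mul_one]
      _ = ENNReal.ofReal ν + ∑' t, ∫⁻ ω, h t ω ∂P := by
          rw [lintegral_tsum (fun t => (hhmeas t).aemeasurable)]
      _ = ENNReal.ofReal ν + (∑' t : ℕ, P {ω' | t + 1 ≤ T ω'}) * ENNReal.ofReal c := by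
          simp_rw [hhval]; rw [ENNReal.tsum_mul_right]
      _ = ENNReal.ofReal ν + ENNReal.ofReal Eτ * ENNReal.ofReal c := by rw [hsumT]
      _ = ENNReal.ofReal (ν + Eτ * c) := by
          rw [← ENNReal.ofReal_mul (le_of_lt hEτpos),
            ← ENNReal.ofReal_add (le_of_lt hν) (mul_nonneg (le_of_lt hEτpos) hc0)]
      _ ≤ ENNReal.ofReal (β * Eτ) := by
          apply ENNReal.ofReal_le_ofReal
          have hkey : ν ≤ Eτ * (ν / γ) := by
            have h0 : ν = γ * (ν / γ) := by field_simp
            calc ν = γ * (ν / γ) := h0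
              _ ≤ Eτ * (ν / γ) := mul_le_mul_of_nonneg_right hTγ (by positivity)
          simp only [hcdef]
          nlinarith [hkey]
  -- measurability of ω ↦ X (T ω) ω
  have hXTm : Measurable (fun ω => X (T ω) ω) := by
    intro s hs
    have heq : (fun ω => X (T ω) ω) ⁻¹' s
        = ⋃ t : ℕ, ({ω | T ω = t + 1} ∩ X (t+1) ⁻¹' s) := by
      ext ω
      simp only [Set.mem_preimage, Set.mem_iUnion, Set.mem_inter_iff, Set.mem_setOf_eq]
      constructor
      · intro hmem
        obtain ⟨k, hk⟩ : ∃ k, T ω = k + 1 := ⟨T ω - 1, by have := hT1 ω; omega⟩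
        exact ⟨k, hk, by rwa [← hk]⟩
      · rintro ⟨t, ht, hmem⟩
        rwa [ht]
    rw [heq]
    exact MeasurableSet.iUnion fun t =>
      (hTmeas (measurableSet_singleton (t+1))).inter (hmeas (t+1) (by omega) hs)
  -- conclusion
  rw [integral_eq_lintegral_of_nonneg_ae
    (Filter.Eventually.of_forall fun ω => hnonneg (T ω) (hT1 ω) ω)
    hXTm.aestronglyMeasurable]
  calc (∫⁻ ω, ENNReal.ofReal (X (T ω) ω) ∂P).toReal
      ≤ (ENNReal.ofReal (β * Eτ)).toReal := ENNReal.toReal_mono ENNReal.ofReal_ne_top hmain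
    _ = β * Eτ := ENNReal.toReal_ofReal (mul_nonneg hβ0 (le_of_lt hEτpos))
end

section
/- Let 0 < |α| < 1, σ > 0, μ ∈ ℝ and ν ≥ 0. Then inf_{z ∈ ℝ} N((1−α)μ + αz, 1+σ²)({x ∈ ℝ : |x + μ(1−α²)/σ²| ≥ ν}) = 2Φ(−ν/√(1+σ²)), where Φ is the standard normal cumulative distribution function. -/
open MeasureTheory ProbabilityTheory

/-- The standard normal cumulative distribution function `Φ`. -/
noncomputable def stdNormalCDF (y : ℝ) : ℝ :=
  ((gaussianReal 0 1) (Set.Iic y)).toReal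

section Aux

open Set

/-- The standard normal pdf. -/
noncomputable def stdPdf : ℝ → ℝ := gaussianPDFReal 0 1

lemma stdPdf_cont : Continuous stdPdf := by unfold stdPdf gaussianPDFReal; continuity

lemma stdPdf_mono {x y : ℝ} (h : |y| ≤ |x|) : stdPdf x ≤ stdPdf y := by
  unfold stdPdf gaussianPDFReal
  have hy2 : y ^ 2 ≤ x ^ 2 := by
    rw [← sq_abs x, ← sq_abs y]; exact pow_le_pow_left₀ (abs_nonneg y) h 2
  have : Real.exp (-(x - 0) ^ 2 / (2 * ((1:NNReal):ℝ))) ≤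
      Real.exp (-(y - 0) ^ 2 / (2 * ((1:NNReal):ℝ))) := by
    apply Real.exp_le_exp.2; simp only [NNReal.coe_one, sub_zero]; nlinarith
  exact mul_le_mul_of_nonneg_left this (inv_nonneg.2 (Real.sqrt_nonneg _))

lemma stdPdf_even (x : ℝ) : stdPdf (-x) = stdPdf x := by
  unfold stdPdf gaussianPDFReal; norm_num

lemma stdPdf_intervalIntegrable (a b : ℝ) : IntervalIntegrable stdPdf volume a b :=
  stdPdf_cont.intervalIntegrable a b

lemma stdPdf_shift_intervalIntegrable (d a b : ℝ) :
    IntervalIntegrable (fun x => stdPdf (x + d)) volume a b :=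
  (stdPdf_cont.comp (continuous_id.add continuous_const)).intervalIntegrable a b

lemma key_nonneg (h t : ℝ) (hh : 0 ≤ h) (ht : 0 ≤ t) :
    ∫ x in (t - h)..(t + h), stdPdf x ≤ ∫ x in (-h)..h, stdPdf x := by
  rcases le_or_gt t (2 * h) with hc | hc
  · have e1 : (∫ x in (t - h)..(t + h), stdPdf x)
        = (∫ x in (t - h)..h, stdPdf x) + ∫ x in h..(t + h), stdPdf x :=
      (intervalIntegral.integral_add_adjacent_intervals
        (stdPdf_intervalIntegrable _ _) (stdPdf_intervalIntegrable _ _)).symm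
    have e2 : (∫ x in (-h)..h, stdPdf x)
        = (∫ x in (-h)..(t - h), stdPdf x) + ∫ x in (t - h)..h, stdPdf x :=
      (intervalIntegral.integral_add_adjacent_intervals
        (stdPdf_intervalIntegrable _ _) (stdPdf_intervalIntegrable _ _)).symm
    have e3 : (∫ x in (-h)..(t - h), stdPdf (x + 2 * h)) = ∫ x in h..(t + h), stdPdf x := by
      rw [intervalIntegral.integral_comp_add_right]
      congr 1 <;> ring
    have e4 : (∫ x in (-h)..(t - h), stdPdf (x + 2 * h))
        ≤ ∫ x in (-h)..(t - h), stdPdf x := by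
      apply intervalIntegral.integral_mono_on (by linarith)
        (stdPdf_shift_intervalIntegrable _ _ _) (stdPdf_intervalIntegrable _ _)
      intro x hx
      apply stdPdf_mono
      have h1 : -h ≤ x := hx.1
      have h2 : x ≤ t - h := hx.2
      rw [abs_of_nonneg (by linarith : (0:ℝ) ≤ x + 2 * h), abs_le]
      constructor <;> linarith
    linarith
  · have e : (∫ x in (-h)..h, stdPdf (x + t)) = ∫ x in (t - h)..(t + h), stdPdf x := by
      rw [intervalIntegral.integral_comp_add_right]
      congr 1 <;> ring
    rw [← e]
    apply intervalIntegral.integral_mono_on (by linarith)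
      (stdPdf_shift_intervalIntegrable _ _ _) (stdPdf_intervalIntegrable _ _)
    intro x hx
    apply stdPdf_mono
    have h1 : -h ≤ x := hx.1
    have h2 : x ≤ h := hx.2
    rw [abs_of_nonneg (by linarith : (0:ℝ) ≤ x + t), abs_le]
    constructor <;> linarith

lemma key (h t : ℝ) (hh : 0 ≤ h) :
    ∫ x in (t - h)..(t + h), stdPdf x ≤ ∫ x in (-h)..h, stdPdf x := by
  rcases le_or_gt 0 t with ht | ht
  · exact key_nonneg h t hh ht
  · have e : (∫ x in (t - h)..(t + h), stdPdf x)
        = ∫ x in (-t - h)..(-t + h), stdPdf x := by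
      calc (∫ x in (t - h)..(t + h), stdPdf x)
          = ∫ x in (t - h)..(t + h), stdPdf (-x) := by simp_rw [stdPdf_even]
        _ = ∫ x in (-(t + h))..(-(t - h)), stdPdf x := intervalIntegral.integral_comp_neg _
        _ = ∫ x in (-t - h)..(-t + h), stdPdf x := by congr 1 <;> ring
    rw [e]
    exact key_nonneg h (-t) hh (by linarith)

lemma gauss_Ioo (a b : ℝ) (hab : a ≤ b) :
    ((gaussianReal 0 1) (Ioo a b)).toReal = ∫ x in a..b, stdPdf x := by
  rw [gaussianReal_apply_eq_integral 0 one_ne_zero]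
  rw [ENNReal.toReal_ofReal
    (setIntegral_nonneg measurableSet_Ioo fun x _ => gaussianPDFReal_nonneg 0 1 x)]
  rw [intervalIntegral.integral_of_le hab, integral_Ioc_eq_integral_Ioo]
  rfl

lemma gauss_neg_map : (gaussianReal 0 1).map (fun x : ℝ => (-1 : ℝ) * x) = gaussianReal 0 1 := by
  rw [gaussianReal_map_const_mul]
  norm_num

lemma gauss_symm (a : ℝ) : (gaussianReal 0 1) (Iic a) = (gaussianReal 0 1) (Ici (-a)) := by
  conv_rhs => rw [← gauss_neg_map]
  rw [Measure.map_apply (measurable_const_mul _) measurableSet_Ici]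
  congr 1
  ext x
  simp only [mem_preimage, mem_Ici, mem_Iic]
  constructor <;> intro <;> linarith

lemma gauss_singleton (x : ℝ) : (gaussianReal 0 1) {x} = 0 :=
  (gaussianReal_absolutelyContinuous 0 one_ne_zero) (measure_singleton x)

lemma gauss_map_affine (m s : ℝ) :
    (gaussianReal 0 1).map (fun x : ℝ => s * x + m)
      = gaussianReal m ((s ^ 2).toNNReal) := by
  have h1 : (fun x : ℝ => s * x + m) = (fun x : ℝ => x + m) ∘ (fun x : ℝ => s * x) := rfl
  rw [h1, ← Measure.map_map (measurable_add_const m) (measurable_const_mul s)]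
  rw [gaussianReal_map_const_mul, gaussianReal_map_add_const]
  norm_num
  congr 1
  ext
  simp [Real.coe_toNNReal _ (sq_nonneg s)]

lemma cdf_half : stdNormalCDF 0 = 1 / 2 := by
  have h1 : (gaussianReal 0 1) (Iic (0:ℝ)) = (gaussianReal 0 1) (Ici (0:ℝ)) := by
    simpa using gauss_symm 0
  have h2 : (gaussianReal 0 1) (Iio (0:ℝ)) + (gaussianReal 0 1) (Ici (0:ℝ)) = 1 := by
    rw [← measure_union (Iio_disjoint_Ici le_rfl) measurableSet_Ici, Iio_union_Ici]
    simp
  have h3 : (gaussianReal 0 1) (Iic (0:ℝ)) = (gaussianReal 0 1) (Iio (0:ℝ)) := by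
    refine le_antisymm ?_ (measure_mono Iio_subset_Iic_self)
    rw [← Iio_union_right]
    refine (measure_union_le _ _).trans ?_
    rw [gauss_singleton 0, add_zero]
  unfold stdNormalCDF
  have h4 : (gaussianReal 0 1) (Iic (0:ℝ)) + (gaussianReal 0 1) (Iic (0:ℝ)) = 1 := by
    rw [h3]; nth_rewrite 2 [h3.symm]; rw [h1]; exact h2
  have h5 := congrArg ENNReal.toReal h4
  rw [ENNReal.toReal_add (measure_ne_top _ _) (measure_ne_top _ _)] at h5
  simp at h5
  linarith

lemma one_sub_Ioo (h : ℝ) (hh : 0 ≤ h) :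
    1 - ((gaussianReal 0 1) (Ioo (-h) h)).toReal = 2 * stdNormalCDF (-h) := by
  rcases eq_or_lt_of_le hh with rfl | hpos
  · simp [cdf_half]
  · have hdisj1 : Disjoint (Iic (-h)) (Ioo (-h) h) := by
      rw [Set.disjoint_left]; intro x hx hx'; exact absurd hx'.1 (not_lt.2 hx)
    have hdisj2 : Disjoint (Iic (-h) ∪ Ioo (-h) h) (Ici h) := by
      rw [Set.disjoint_left]; intro x hx hx'
      rcases hx with hx | hx
      · simp only [mem_Iic] at hx; simp only [mem_Ici] at hx'; linarith
      · exact absurd (mem_Ici.1 hx') (not_le.2 hx.2)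
    have hU : Iic (-h) ∪ Ioo (-h) h ∪ Ici h = univ := by
      ext x; simp only [mem_union, mem_Iic, mem_Ioo, mem_Ici, mem_univ, iff_true]
      rcases le_or_gt x (-h) with h1 | h1
      · exact Or.inl (Or.inl h1)
      · rcases lt_or_ge x h with h2 | h2
        · exact Or.inl (Or.inr ⟨h1, h2⟩)
        · exact Or.inr h2
    have htot : (gaussianReal 0 1) (Iic (-h)) + (gaussianReal 0 1) (Ioo (-h) h)
        + (gaussianReal 0 1) (Ici h) = 1 := by
      rw [← measure_union hdisj1 measurableSet_Ioo,
        ← measure_union hdisj2 measurableSet_Ici, hU]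
      simp
    have hsym : (gaussianReal 0 1) (Ici h) = (gaussianReal 0 1) (Iic (-h)) := by
      rw [gauss_symm (-h), neg_neg]
    rw [hsym] at htot
    have h5 := congrArg ENNReal.toReal htot
    rw [ENNReal.toReal_add (by finiteness) (measure_ne_top _ _),
      ENNReal.toReal_add (measure_ne_top _ _) (measure_ne_top _ _)] at h5
    simp only [ENNReal.toReal_one] at h5
    unfold stdNormalCDF
    linarith

end Aux

/-- Worst-case (over the Markov state `z`) detection probability of the mismatched
Shewhart test `𝒮₁`: for `0 < |α| < 1`, `σ > 0`, `μ ∈ ℝ` and `ν ≥ 0`,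
`inf_z N((1−α)μ + αz, 1+σ²)({x : |x + μ(1−α²)/σ²| ≥ ν}) = 2Φ(−ν/√(1+σ²))`. -/
theorem stmt_14 (α σ μ ν : ℝ) (hα0 : 0 < |α|) (hα1 : |α| < 1) (hσ : 0 < σ) (hν : 0 ≤ ν) :
    ⨅ z : ℝ, ((gaussianReal ((1 - α) * μ + α * z) ((1 + σ ^ 2).toNNReal))
        {x : ℝ | ν ≤ |x + μ * (1 - α ^ 2) / σ ^ 2|}).toReal
      = 2 * stdNormalCDF (-ν / Real.sqrt (1 + σ ^ 2)) := by
  have h1σ : (0:ℝ) < 1 + σ ^ 2 := by positivity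
  have hα : α ≠ 0 := fun h => by simp [h] at hα0
  set s : ℝ := Real.sqrt (1 + σ ^ 2) with hs_def
  have hs : 0 < s := Real.sqrt_pos.2 h1σ
  have hs2 : s ^ 2 = 1 + σ ^ 2 := Real.sq_sqrt h1σ.le
  set c : ℝ := μ * (1 - α ^ 2) / σ ^ 2 with hc_def
  set h : ℝ := ν / s with hh_def
  have hh : 0 ≤ h := div_nonneg hν hs.le
  have hSmeas : MeasurableSet {x : ℝ | ν ≤ |x + c|} :=
    measurableSet_le measurable_const
      ((continuous_abs.comp (continuous_id.add continuous_const)).measurable)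
  have hScompl : {x : ℝ | ν ≤ |x + c|}ᶜ = Set.Ioo (-c - ν) (-c + ν) := by
    ext x
    simp only [Set.mem_compl_iff, Set.mem_setOf_eq, not_le, Set.mem_Ioo, abs_lt]
    constructor
    · rintro ⟨h1, h2⟩; constructor <;> linarith
    · rintro ⟨h1, h2⟩; constructor <;> linarith
  -- formula for the probability at each z
  have hF : ∀ z : ℝ, ((gaussianReal ((1 - α) * μ + α * z) ((1 + σ ^ 2).toNNReal))
        {x : ℝ | ν ≤ |x + μ * (1 - α ^ 2) / σ ^ 2|}).toReal
      = 1 - ∫ x in ((-c - ((1 - α) * μ + α * z)) / s - h)..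
          ((-c - ((1 - α) * μ + α * z)) / s + h), stdPdf x := by
    intro z
    set m : ℝ := (1 - α) * μ + α * z with hm_def
    set t : ℝ := (-c - m) / s with ht_def
    have hmap : gaussianReal m ((1 + σ ^ 2).toNNReal)
        = (gaussianReal 0 1).map (fun x : ℝ => s * x + m) := by
      rw [gauss_map_affine m s, hs2]
    have hpre : (fun x : ℝ => s * x + m) ⁻¹' Set.Ioo (-c - ν) (-c + ν)
        = Set.Ioo (t - h) (t + h) := by
      have et1 : t - h = (-c - ν - m) / s := by
        rw [ht_def, hh_def]; field_simp; ring
      have et2 : t + h = (-c + ν - m) / s := by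
        rw [ht_def, hh_def]; field_simp; ring
      ext x
      simp only [Set.mem_preimage, Set.mem_Ioo, et1, et2, div_lt_iff₀ hs, lt_div_iff₀ hs]
      have hcomm : x * s = s * x := mul_comm x s
      constructor
      · rintro ⟨h1, h2⟩; constructor <;> linarith
      · rintro ⟨h1, h2⟩; constructor <;> linarith
    have hIoo : (gaussianReal m ((1 + σ ^ 2).toNNReal)) {x : ℝ | ν ≤ |x + c|}ᶜ
        = (gaussianReal 0 1) (Set.Ioo (t - h) (t + h)) := by
      rw [hScompl, hmap,
        Measure.map_apply ((measurable_const_mul s).add_const m) measurableSet_Ioo, hpre]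
    have hcompl := measure_add_measure_compl (μ := gaussianReal m ((1 + σ ^ 2).toNNReal)) hSmeas
    rw [hIoo] at hcompl
    have h5 := congrArg ENNReal.toReal hcompl
    rw [ENNReal.toReal_add (measure_ne_top _ _) (measure_ne_top _ _)] at h5
    simp only [measure_univ, ENNReal.toReal_one] at h5
    rw [gauss_Ioo _ _ (by linarith)] at h5
    have : {x : ℝ | ν ≤ |x + μ * (1 - α ^ 2) / σ ^ 2|} = {x : ℝ | ν ≤ |x + c|} := by
      rw [hc_def]
    rw [this]
    linarith
  -- infimum
  have hlower : ∀ z : ℝ, 1 - (∫ x in (-h)..h, stdPdf x)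
      ≤ ((gaussianReal ((1 - α) * μ + α * z) ((1 + σ ^ 2).toNNReal))
        {x : ℝ | ν ≤ |x + μ * (1 - α ^ 2) / σ ^ 2|}).toReal := by
    intro z
    rw [hF z]
    have := key h ((-c - ((1 - α) * μ + α * z)) / s) hh
    linarith
  set z0 : ℝ := (-c - (1 - α) * μ) / α with hz0_def
  have ht0 : (-c - ((1 - α) * μ + α * z0)) / s = 0 := by
    rw [hz0_def]
    field_simp
    ring
  have hfinal : 1 - (∫ x in (-h)..h, stdPdf x) = 2 * stdNormalCDF (-ν / Real.sqrt (1 + σ ^ 2)) := by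
    rw [← gauss_Ioo (-h) h (by linarith)]
    have : -ν / Real.sqrt (1 + σ ^ 2) = -h := by
      rw [hh_def, ← hs_def, neg_div]
    rw [this]
    exact one_sub_Ioo h hh
  rw [← hfinal]
  apply le_antisymm
  · have hbdd : BddBelow (Set.range fun z : ℝ =>
        ((gaussianReal ((1 - α) * μ + α * z) ((1 + σ ^ 2).toNNReal))
        {x : ℝ | ν ≤ |x + μ * (1 - α ^ 2) / σ ^ 2|}).toReal) := by
      refine ⟨1 - (∫ x in (-h)..h, stdPdf x), ?_⟩
      rintro y ⟨z, rfl⟩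
      exact hlower z
    refine (ciInf_le hbdd z0).trans ?_
    rw [hF z0, ht0]
    norm_num
  · exact le_ciInf hlower
end

section
/- Let (ξ_t)_{t≥1} be an i.i.d. sequence of real-valued random variables with natural filtration (𝓕_t), let L : ℝ → [0,∞) be measurable with E[L(ξ_1)] < ∞, let T be a stopping time with E[T] < ∞, and let c ≥ 0. If for every t ≥ 0 one has E[L(ξ_{t+1})·1{T = t+1} | 𝓕_t] ≥ c·P(T > t | 𝓕_t) almost surely, then E[L(ξ_T)] ≥ c·E[T]. -/
open MeasureTheory ProbabilityTheory

/-- If `(ξ_t)_{t≥1}` is i.i.d., `L : ℝ → [0,∞)` is measurable with `E[L(ξ_1)] < ∞`, `T` is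
a stopping time of the natural filtration with `E[T] < ∞`, `c ≥ 0`, and for every `t ≥ 0`
one has `E[L(ξ_{t+1})·1{T = t+1} | 𝓕_t] ≥ c·P(T > t | 𝓕_t)` a.s., then
`E[L(ξ_T)] ≥ c·E[T]`. -/
theorem stmt_16
    {Ω : Type*} [MeasurableSpace Ω] (P : Measure Ω) [IsProbabilityMeasure P]
    (ξ : ℕ → Ω → ℝ)
    (hmeas : ∀ t, 1 ≤ t → Measurable (ξ t))
    (hindep : iIndepFun
      (fun i : {n : ℕ // 1 ≤ n} => ξ i.1) P)
    (hident : ∀ t, 1 ≤ t → IdentDistrib (ξ t) (ξ 1) P P)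
    (L : ℝ → ℝ) (hL : Measurable L) (hL0 : ∀ x, 0 ≤ L x)
    (hLint : Integrable (fun ω => L (ξ 1 ω)) P)
    (T : Ω → ℕ)
    (hT1 : ∀ ω, 1 ≤ T ω)
    (hTstop : ∀ t, MeasurableSet[natFiltration ξ t] {ω | T ω = t})
    (hTint : Integrable (fun ω => (T ω : ℝ)) P)
    (c : ℝ) (hc : 0 ≤ c)
    (hbound : ∀ t : ℕ, ∀ᵐ ω ∂P,
      c * (P[Set.indicator {ω' | t < T ω'} (fun _ => (1 : ℝ)) | natFiltration ξ t]) ω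
        ≤ (P[Set.indicator {ω' | T ω' = t + 1} (fun ω' => L (ξ (t + 1) ω'))
            | natFiltration ξ t]) ω) :
    c * ∫ ω, (T ω : ℝ) ∂P ≤ ∫ ω, L (ξ (T ω) ω) ∂P := by
  classical
  -- the filtration is below the ambient σ-algebra
  have hle : ∀ t, natFiltration ξ t ≤ ‹MeasurableSpace Ω› := by
    intro t
    exact iSup₂_le fun s hs => (hmeas s hs.1).comap_le
  -- monotonicity of the filtration
  have hmono : ∀ s t : ℕ, s ≤ t → natFiltration ξ s ≤ natFiltration ξ t := by
    intro s t hst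
    exact iSup₂_le fun u hu => le_iSup₂ (f := fun u _ =>
      MeasurableSpace.comap (ξ u) inferInstance) u ⟨hu.1, hu.2.trans hst⟩
  -- T is measurable
  have hTset : ∀ t, MeasurableSet {ω | T ω = t} := fun t => hle t _ (hTstop t)
  have hTmeas : Measurable T := by
    apply measurable_to_countable'
    intro t
    exact hTset t
  have hAset : ∀ t, MeasurableSet {ω | t < T ω} :=
    fun t => hTmeas measurableSet_Ioi
  -- {t < T} is measurable w.r.t. the filtration at time t
  have hAsetF : ∀ t, MeasurableSet[natFiltration ξ t] {ω | t < T ω} := by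
    intro t
    have : {ω | t < T ω} = (⋃ s ∈ Finset.range (t + 1), {ω | T ω = s})ᶜ := by
      ext ω
      simp only [Set.mem_setOf_eq, Set.mem_compl_iff, Set.mem_iUnion, Finset.mem_range,
        not_exists, not_and]
      constructor
      · intro h s hs hT; omega
      · intro h
        by_contra hlt
        exact h (T ω) (by omega) rfl
    rw [this]
    refine MeasurableSet.compl (MeasurableSet.biUnion (Finset.range (t + 1)).countable_toSet
      fun s hs => ?_)
    exact hmono s t (Nat.lt_succ_iff.1 (Finset.mem_range.1 hs)) _ (hTstop s)
  -- integrability of L ∘ ξ t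
  have hLint' : ∀ t, 1 ≤ t → Integrable (fun ω => L (ξ t ω)) P := by
    intro t ht
    exact (((hident t ht).comp hL).integrable_iff).2 hLint
  -- the functions involved
  set g : ℕ → Ω → ℝ := fun t => Set.indicator {ω' | t < T ω'} (fun _ => (1 : ℝ)) with hg
  set f : ℕ → Ω → ℝ :=
    fun t => Set.indicator {ω' | T ω' = t + 1} (fun ω' => L (ξ (t + 1) ω')) with hf
  have hg_nn : ∀ t ω, 0 ≤ g t ω := fun t ω => Set.indicator_nonneg (fun _ _ => zero_le_one) ω
  have hf_nn : ∀ t ω, 0 ≤ f t ω := fun t ω => Set.indicator_nonneg (fun x _ => hL0 _) ω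
  have hg_int : ∀ t, Integrable (g t) P :=
    fun t => (integrable_const (1 : ℝ)).indicator (hAset t)
  have hf_int : ∀ t, Integrable (f t) P :=
    fun t => (hLint' (t + 1) (by omega)).indicator (hTset (t + 1))
  -- Step C : integrate the conditional bound
  have key : ∀ t, c * ∫ ω, g t ω ∂P ≤ ∫ ω, f t ω ∂P := by
    intro t
    haveI : SigmaFinite (P.trim (hle t)) := by
      have : IsFiniteMeasure (P.trim (hle t)) := isFiniteMeasure_trim (hle t)
      infer_instance
    have h2 : ∫ ω, c * (P[g t | natFiltration ξ t]) ω ∂P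
        ≤ ∫ ω, (P[f t | natFiltration ξ t]) ω ∂P :=
      integral_mono_ae (integrable_condExp.const_mul c) integrable_condExp (hbound t)
    calc c * ∫ ω, g t ω ∂P
        = c * ∫ ω, (P[g t | natFiltration ξ t]) ω ∂P := by
          rw [integral_condExp (hle t)]
      _ = ∫ ω, c * (P[g t | natFiltration ξ t]) ω ∂P := (integral_const_mul c _).symm
      _ ≤ ∫ ω, (P[f t | natFiltration ξ t]) ω ∂P := h2
      _ = ∫ ω, f t ω ∂P := integral_condExp (hle t)
  -- ENNReal versions
  set G : ℕ → Ω → ENNReal := fun t => Set.indicator {ω' | t < T ω'} (fun _ => (1 : ENNReal))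
    with hG
  set F : ℕ → Ω → ENNReal := fun t ω => ENNReal.ofReal (f t ω) with hF
  have hGg : ∀ t ω, G t ω = ENNReal.ofReal (g t ω) := by
    intro t ω
    by_cases h : t < T ω <;> simp [hG, hg, Set.indicator_apply, h]
  have hG_meas : ∀ t, Measurable (G t) := fun t => measurable_const.indicator (hAset t)
  have hG_measF : ∀ t, Measurable[natFiltration ξ t] (G t) :=
    fun t => measurable_const.indicator (hAsetF t)
  have hF_meas : ∀ t, Measurable (F t) := by
    intro t
    exact ENNReal.measurable_ofReal.comp
      ((hL.comp (hmeas (t + 1) (by omega))).indicator (hTset (t + 1)))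
  -- lintegral of G t and F t in terms of integrals
  have hGint : ∀ t, ∫⁻ ω, G t ω ∂P = ENNReal.ofReal (∫ ω, g t ω ∂P) := by
    intro t
    rw [ofReal_integral_eq_lintegral_ofReal (hg_int t) (Filter.Eventually.of_forall (hg_nn t))]
    exact lintegral_congr fun ω => hGg t ω
  have hFint : ∀ t, ∫⁻ ω, F t ω ∂P = ENNReal.ofReal (∫ ω, f t ω ∂P) := by
    intro t
    rw [ofReal_integral_eq_lintegral_ofReal (hf_int t) (Filter.Eventually.of_forall (hf_nn t))]
  -- termwise inequality in ENNReal
  have keyE : ∀ t, ENNReal.ofReal c * ∫⁻ ω, G t ω ∂P ≤ ∫⁻ ω, F t ω ∂P := by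
    intro t
    rw [hGint t, hFint t, ← ENNReal.ofReal_mul hc]
    exact ENNReal.ofReal_le_ofReal (key t)
  -- sum of G's is T
  have hTsum : ∀ ω, ∑' t, G t ω = (T ω : ENNReal) := by
    intro ω
    have h0 : ∀ t ∉ Finset.range (T ω), G t ω = 0 := by
      intro t ht
      simp only [Finset.mem_range, not_lt] at ht
      simp [hG, Set.indicator_apply, not_lt.2 ht]
    rw [tsum_eq_sum h0]
    have : ∀ t ∈ Finset.range (T ω), G t ω = 1 := by
      intro t ht
      simp only [Finset.mem_range] at ht
      simp [hG, Set.indicator_apply, ht]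
    rw [Finset.sum_congr rfl this]
    simp
  -- sum of F's is L(ξ_T)
  have hFsum : ∀ ω, ∑' t, F t ω = ENNReal.ofReal (L (ξ (T ω) ω)) := by
    intro ω
    have h1 : ∀ t ≠ T ω - 1, F t ω = 0 := by
      intro t ht
      have : T ω ≠ t + 1 := by have := hT1 ω; omega
      simp [hF, hf, Set.indicator_apply, this]
    rw [tsum_eq_single (T ω - 1) h1]
    have hTω : T ω - 1 + 1 = T ω := by have := hT1 ω; omega
    simp [hF, hf, Set.indicator_apply, hTω]
  -- independence : filtration at time t ⟂ ξ_{t+1}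
  have hindepF : ∀ t, Indep (natFiltration ξ t)
      (MeasurableSpace.comap (ξ (t + 1)) inferInstance) P := by
    intro t
    have hiI : iIndep (fun i : {n : ℕ // 1 ≤ n} =>
        MeasurableSpace.comap (ξ i.1) inferInstance) P := hindep
    have h := indep_iSup_of_disjoint (fun i => (hmeas i.1 i.2).comap_le) hiI
      (S := {i : {n : ℕ // 1 ≤ n} | i.1 ≤ t}) (T := {i : {n : ℕ // 1 ≤ n} | i.1 = t + 1})
      (by
        rw [Set.disjoint_left]
        rintro i hi hi'
        simp only [Set.mem_setOf_eq] at hi hi'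
        omega)
    have hS : natFiltration ξ t
        ≤ ⨆ i ∈ {i : {n : ℕ // 1 ≤ n} | i.1 ≤ t},
            MeasurableSpace.comap (ξ i.1) inferInstance := by
      refine iSup₂_le fun s hs => ?_
      exact le_iSup₂ (f := fun (i : {n : ℕ // 1 ≤ n})
        (_ : i ∈ {i : {n : ℕ // 1 ≤ n} | i.1 ≤ t}) =>
        MeasurableSpace.comap (ξ i.1) inferInstance) ⟨s, hs.1⟩ hs.2
    have hT' : MeasurableSpace.comap (ξ (t + 1)) inferInstance
        ≤ ⨆ i ∈ {i : {n : ℕ // 1 ≤ n} | i.1 = t + 1},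
            MeasurableSpace.comap (ξ i.1) inferInstance :=
      le_iSup₂ (f := fun (i : {n : ℕ // 1 ≤ n})
        (_ : i ∈ {i : {n : ℕ // 1 ≤ n} | i.1 = t + 1}) =>
        MeasurableSpace.comap (ξ i.1) inferInstance) ⟨t + 1, by omega⟩ rfl
    exact indep_of_indep_of_le_right (indep_of_indep_of_le_left h hS) hT'
  -- constant C = E[L(ξ_1)] as ENNReal
  set C : ENNReal := ∫⁻ ω, ENNReal.ofReal (L (ξ 1 ω)) ∂P with hC
  have hCfin : C ≠ ⊤ := by
    have h1 : ∫⁻ ω, ENNReal.ofReal (L (ξ 1 ω)) ∂P = ∫⁻ ω, ‖L (ξ 1 ω)‖ₑ ∂P :=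
      lintegral_congr fun ω => (Real.enorm_eq_ofReal (hL0 _)).symm
    rw [hC, h1]
    exact hLint.2.ne
  -- bound each term of the F-sum
  have hFbound : ∀ t, ∫⁻ ω, F t ω ∂P ≤ (∫⁻ ω, G t ω ∂P) * C := by
    intro t
    have hpt : ∀ ω, F t ω ≤ G t ω * ENNReal.ofReal (L (ξ (t + 1) ω)) := by
      intro ω
      by_cases h : T ω = t + 1
      · have h' : t < T ω := by omega
        simp [hF, hf, hG, Set.indicator_apply, h, h']
      · simp [hF, hf, Set.indicator_apply, h]
    have hmul : ∫⁻ ω, G t ω * ENNReal.ofReal (L (ξ (t + 1) ω)) ∂P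
        = (∫⁻ ω, G t ω ∂P) * ∫⁻ ω, ENNReal.ofReal (L (ξ (t + 1) ω)) ∂P := by
      refine lintegral_mul_eq_lintegral_mul_lintegral_of_independent_measurableSpace
        (hle t) (hmeas (t + 1) (by omega)).comap_le (hindepF t) (hG_measF t) ?_
      exact (ENNReal.measurable_ofReal.comp hL).comp (Measurable.of_comap_le le_rfl)
    have hident' : ∫⁻ ω, ENNReal.ofReal (L (ξ (t + 1) ω)) ∂P = C := by
      exact (((hident (t + 1) (by omega)).comp hL).comp
        ENNReal.measurable_ofReal).lintegral_eq
    calc ∫⁻ ω, F t ω ∂P ≤ ∫⁻ ω, G t ω * ENNReal.ofReal (L (ξ (t + 1) ω)) ∂P :=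
          lintegral_mono hpt
      _ = (∫⁻ ω, G t ω ∂P) * C := by rw [hmul, hident']
  -- lintegral of T
  have hTcastint : ∫⁻ ω, (T ω : ENNReal) ∂P = ENNReal.ofReal (∫ ω, (T ω : ℝ) ∂P) := by
    rw [ofReal_integral_eq_lintegral_ofReal hTint
      (Filter.Eventually.of_forall fun ω => Nat.cast_nonneg _)]
    exact lintegral_congr fun ω => (ENNReal.ofReal_natCast _).symm
  have hTcast_fin : ∫⁻ ω, (T ω : ENNReal) ∂P ≠ ⊤ := by
    rw [hTcastint]; exact ENNReal.ofReal_ne_top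
  -- sum identities via lintegral_tsum
  have hGsum : ∑' t, ∫⁻ ω, G t ω ∂P = ∫⁻ ω, (T ω : ENNReal) ∂P := by
    rw [← lintegral_tsum fun t => (hG_meas t).aemeasurable]
    exact lintegral_congr fun ω => hTsum ω
  have hFsum' : ∑' t, ∫⁻ ω, F t ω ∂P = ∫⁻ ω, ENNReal.ofReal (L (ξ (T ω) ω)) ∂P := by
    rw [← lintegral_tsum fun t => (hF_meas t).aemeasurable]
    exact lintegral_congr fun ω => hFsum ω
  -- finiteness of the F-sum
  have hFfin : ∫⁻ ω, ENNReal.ofReal (L (ξ (T ω) ω)) ∂P ≠ ⊤ := by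
    rw [← hFsum']
    have h1 : ∑' t, ∫⁻ ω, F t ω ∂P ≤ ∑' t, (∫⁻ ω, G t ω ∂P) * C :=
      ENNReal.tsum_le_tsum hFbound
    have h2 : ∑' t, (∫⁻ ω, G t ω ∂P) * C = (∫⁻ ω, (T ω : ENNReal) ∂P) * C := by
      rw [ENNReal.tsum_mul_right, hGsum]
    exact ne_top_of_le_ne_top (ENNReal.mul_ne_top hTcast_fin hCfin) (h1.trans h2.le)
  -- measurability of ω ↦ L (ξ (T ω) ω)
  have hmeasLT : Measurable fun ω => L (ξ (T ω) ω) := by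
    set ξ' : ℕ → Ω → ℝ := fun n => if n = 0 then ξ 1 else ξ n with hξ'
    have heq : ∀ ω, L (ξ (T ω) ω) = L (ξ' (T ω) ω) := by
      intro ω
      have : T ω ≠ 0 := by have := hT1 ω; omega
      simp [hξ', this]
    have hprod : Measurable fun p : Ω × ℕ => ξ' p.2 p.1 := by
      apply measurable_from_prod_countable_left
      intro n
      by_cases hn : n = 0 <;> simp [hξ', hn]
      exacts [hmeas 1 le_rfl, hmeas n (by omega)]
    have : Measurable fun ω => ξ' (T ω) ω :=
      hprod.comp (measurable_id.prodMk hTmeas)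
    simpa [funext heq, Function.comp_def] using hL.comp this
  -- integrability of L(ξ_T)
  have hLTint : Integrable (fun ω => L (ξ (T ω) ω)) P := by
    refine ⟨hmeasLT.aestronglyMeasurable, ?_⟩
    rw [HasFiniteIntegral]
    have : ∫⁻ ω, ‖L (ξ (T ω) ω)‖ₑ ∂P
        = ∫⁻ ω, ENNReal.ofReal (L (ξ (T ω) ω)) ∂P :=
      lintegral_congr fun ω => Real.enorm_eq_ofReal (hL0 _)
    rw [this]
    exact lt_top_iff_ne_top.2 hFfin
  -- final assembly
  have hmain : ENNReal.ofReal (c * ∫ ω, (T ω : ℝ) ∂P)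
      ≤ ∫⁻ ω, ENNReal.ofReal (L (ξ (T ω) ω)) ∂P := by
    rw [ENNReal.ofReal_mul hc, ← hTcastint, ← hGsum, ← hFsum', ← ENNReal.tsum_mul_left]
    exact ENNReal.tsum_le_tsum keyE
  have hR : ∫ ω, L (ξ (T ω) ω) ∂P
      = (∫⁻ ω, ENNReal.ofReal (L (ξ (T ω) ω)) ∂P).toReal := by
    rw [← ofReal_integral_eq_lintegral_ofReal hLTint
      (Filter.Eventually.of_forall fun ω => hL0 _)]
    rw [ENNReal.toReal_ofReal (integral_nonneg fun ω => hL0 _)]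
  have hcT_nn : 0 ≤ c * ∫ ω, (T ω : ℝ) ∂P :=
    mul_nonneg hc (integral_nonneg fun ω => Nat.cast_nonneg _)
  calc c * ∫ ω, (T ω : ℝ) ∂P
      = (ENNReal.ofReal (c * ∫ ω, (T ω : ℝ) ∂P)).toReal := (ENNReal.toReal_ofReal hcT_nn).symm
    _ ≤ (∫⁻ ω, ENNReal.ofReal (L (ξ (T ω) ω)) ∂P).toReal := ENNReal.toReal_mono hFfin hmain
    _ = ∫ ω, L (ξ (T ω) ω) ∂P := hR.symm
end

section
/- Let (ξ_t)_{t≥1} be an i.i.d. sequence of real-valued random variables, let L : ℝ → [0,∞) be measurable with E[L(ξ_1)] < ∞, and let γ > 1 and ν > 0 satisfy P(L(ξ_1) ≥ ν) = 1/γ; set β = E[L(ξ_1)·1{L(ξ_1) ≥ ν}]. Then: (a) every stopping time T of the natural filtration with γ ≤ E[T] < ∞ and P(T > t) > 0 for all t ≥ 0 satisfies inf_{t≥0} E[L(ξ_{t+1})·1{T = t+1}]/P(T > t) ≤ β; and (b) the Shewhart stopping time S = inf{t ≥ 1 : L(ξ_t) ≥ ν} satisfies E[S] = γ and E[L(ξ_{t+1})·1{S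 = t+1}]/P(S > t) = β for every t ≥ 0. -/
open MeasureTheory ProbabilityTheory
open scoped ENNReal

/-- Tail-sum formula for the Lebesgue integral of an `ℕ`-valued function. -/
lemma tail_lintegral_aux {Ω : Type*} [MeasurableSpace Ω] (P : Measure Ω) (f : Ω → ℕ)
    (hf : ∀ t : ℕ, MeasurableSet {ω | t < f ω}) :
    ∫⁻ ω, (f ω : ℝ≥0∞) ∂P = ∑' t : ℕ, P {ω | t < f ω} := by
  have key : ∀ ω, ∑' t : ℕ, Set.indicator {ω | t < f ω} (fun _ => (1:ℝ≥0∞)) ω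
      = (f ω : ℝ≥0∞) := by
    intro ω
    have h1 : ∀ t : ℕ, Set.indicator {ω | t < f ω} (fun _ => (1:ℝ≥0∞)) ω
        = if t ∈ Finset.range (f ω) then 1 else 0 := by
      intro t; simp [Set.indicator_apply, Finset.mem_range]
    rw [tsum_congr h1, tsum_eq_sum (s := Finset.range (f ω)) (fun t ht => if_neg ht)]
    rw [Finset.sum_congr rfl (fun t ht => if_pos ht)]
    simp
  calc ∫⁻ ω, (f ω : ℝ≥0∞) ∂P
      = ∫⁻ ω, ∑' t : ℕ, Set.indicator {ω | t < f ω} (fun _ => 1) ω ∂P := by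
        simp_rw [key]
    _ = ∑' t : ℕ, ∫⁻ ω, Set.indicator {ω | t < f ω} (fun _ => 1) ω ∂P :=
        lintegral_tsum (fun t => (measurable_one.indicator (hf t)).aemeasurable)
    _ = ∑' t : ℕ, P {ω | t < f ω} := by
        refine tsum_congr fun t => ?_
        rw [lintegral_indicator (hf t)]
        simp

/-- The Shewhart stopping time `S = inf{t ≥ 1 : L(ξ_t) ≥ ν}` (with junk value `0` if the
threshold is never crossed, an event of probability zero when `P(L(ξ_1) ≥ ν) > 0`). -/
noncomputable def shewhart {Ω : Type*} (ξ : ℕ → Ω → ℝ) (L : ℝ → ℝ) (ν : ℝ) (ω : Ω) : ℕ :=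
  sInf {t : ℕ | 1 ≤ t ∧ ν ≤ L (ξ t ω)}

/-- Max-min optimality of the Shewhart test: with `(ξ_t)_{t≥1}` i.i.d., `L : ℝ → [0,∞)`
measurable and integrable at `ξ_1`, `γ > 1`, `ν > 0`, `P(L(ξ_1) ≥ ν) = 1/γ` and
`β = E[L(ξ_1)·1{L(ξ_1) ≥ ν}]`:
(a) every stopping time `T` with `γ ≤ E[T] < ∞` and `P(T > t) > 0` for all `t` satisfies
`inf_t E[L(ξ_{t+1})·1{T = t+1}]/P(T > t) ≤ β`; and
(b) the Shewhart stopping time `S = inf{t ≥ 1 : L(ξ_t) ≥ ν}` satisfies `E[S] = γ` and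
`E[L(ξ_{t+1})·1{S = t+1}]/P(S > t) = β` for every `t ≥ 0`. -/
theorem stmt_17
    {Ω : Type*} [MeasurableSpace Ω] (P : Measure Ω) [IsProbabilityMeasure P]
    (ξ : ℕ → Ω → ℝ)
    (hmeas : ∀ t, 1 ≤ t → Measurable (ξ t))
    (hindep : iIndepFun
      (fun i : {n : ℕ // 1 ≤ n} => ξ i.1) P)
    (hident : ∀ t, 1 ≤ t → IdentDistrib (ξ t) (ξ 1) P P)
    (L : ℝ → ℝ) (hL : Measurable L) (hL0 : ∀ x, 0 ≤ L x)
    (hLint : Integrable (fun ω => L (ξ 1 ω)) P)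
    (γ ν : ℝ) (hγ : 1 < γ) (hν : 0 < ν)
    (hthresh : P {ω | ν ≤ L (ξ 1 ω)} = ENNReal.ofReal (1 / γ))
    (β : ℝ) (hβ : β = ∫ ω in {ω | ν ≤ L (ξ 1 ω)}, L (ξ 1 ω) ∂P) :
    (∀ T : Ω → ℕ, (∀ ω, 1 ≤ T ω) →
      (∀ t, MeasurableSet[natFiltration ξ t] {ω | T ω = t}) →
      Integrable (fun ω => (T ω : ℝ)) P →
      γ ≤ ∫ ω, (T ω : ℝ) ∂P →
      (∀ t : ℕ, 0 < P {ω | t < T ω}) →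
      ⨅ t : ℕ, (∫ ω in {ω | T ω = t + 1}, L (ξ (t + 1) ω) ∂P)
          / (P {ω | t < T ω}).toReal ≤ β)
    ∧ (∫ ω, (shewhart ξ L ν ω : ℝ) ∂P = γ
    ∧ ∀ t : ℕ,
        (∫ ω in {ω | shewhart ξ L ν ω = t + 1}, L (ξ (t + 1) ω) ∂P)
          / (P {ω | t < shewhart ξ L ν ω}).toReal = β) := by
  classical
  have hγ0 : (0:ℝ) < γ := lt_trans one_pos hγ
  set p : ℝ := 1/γ with hp_def
  have hp0 : 0 < p := by positivity
  have hp1 : p < 1 := by rw [hp_def, div_lt_one hγ0]; exact hγ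
  set D : Set ℝ := {x | ν ≤ L x} with hD_def
  have hD : MeasurableSet D := measurableSet_le measurable_const hL
  set C : ℕ → Set Ω := fun s => ξ s ⁻¹' D with hC_def
  have hCmeas : ∀ s, 1 ≤ s → MeasurableSet (C s) := fun s hs => (hmeas s hs) hD
  have hPC : ∀ s, 1 ≤ s → P (C s) = ENNReal.ofReal p := by
    intro s hs
    rw [show C s = ξ s ⁻¹' D from rfl, (hident s hs).measure_mem_eq hD]
    exact hthresh
  set g : ℝ → ℝ := D.indicator L with hg_def
  have hgmeas : Measurable g := hL.indicator hD
  have hg_nonneg : ∀ x, 0 ≤ g x := fun x => Set.indicator_nonneg (fun y _ => hL0 y) x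
  have hg_comp : ∀ s ω, g (ξ s ω) = (C s).indicator (fun ω => L (ξ s ω)) ω := by
    intro s ω
    by_cases h : ξ s ω ∈ D
    · rw [hg_def, Set.indicator_of_mem h, Set.indicator_of_mem (show ω ∈ C s from h)]
    · rw [hg_def, Set.indicator_of_notMem h, Set.indicator_of_notMem (show ω ∉ C s from h)]
  have hLints : ∀ s, 1 ≤ s → Integrable (fun ω => L (ξ s ω)) P := by
    intro s hs
    exact (((hident s hs).comp hL).integrable_iff).2 hLint
  have hgint : ∀ s, 1 ≤ s → Integrable (fun ω => g (ξ s ω)) P := by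
    intro s hs
    refine Integrable.mono' (hLints s hs) ((hgmeas.comp (hmeas s hs)).aestronglyMeasurable) ?_
    filter_upwards with ω
    rw [Real.norm_eq_abs, abs_of_nonneg (hg_nonneg _)]
    exact Set.indicator_le_self' (fun x _ => hL0 x) (ξ s ω)
  have hEg : ∀ s, 1 ≤ s → ∫ ω, g (ξ s ω) ∂P = β := by
    intro s hs
    have hcomp := ((hident s hs).comp hgmeas).integral_eq
    simp only [Function.comp] at hcomp
    rw [hcomp, hβ]
    rw [show {ω | ν ≤ L (ξ 1 ω)} = C 1 from rfl,
      ← integral_indicator (hCmeas 1 le_rfl)]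
    exact integral_congr_ae (Filter.Eventually.of_forall fun ω => hg_comp 1 ω)
  -- filtration facts
  have hfilt_le : ∀ t, natFiltration ξ t ≤ (inferInstance : MeasurableSpace Ω) :=
    fun t => iSup₂_le fun s hs => (hmeas s hs.1).comap_le
  have hfilt_mono : ∀ {s t : ℕ}, s ≤ t → natFiltration ξ s ≤ natFiltration ξ t := by
    intro s t hst
    refine iSup₂_le fun u hu => ?_
    exact le_iSup₂ (f := fun u (_ : u ∈ Set.Icc 1 t) =>
      MeasurableSpace.comap (ξ u) inferInstance) u ⟨hu.1, hu.2.trans hst⟩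
  have hC_filt : ∀ s t : ℕ, 1 ≤ s → s ≤ t → MeasurableSet[natFiltration ξ t] (C s) := by
    intro s t h1 h2
    have h0 : MeasurableSet[MeasurableSpace.comap (ξ s) inferInstance] (C s) := ⟨D, hD, rfl⟩
    exact le_iSup₂ (f := fun u (_ : u ∈ Set.Icc 1 t) =>
      MeasurableSpace.comap (ξ u) inferInstance) s ⟨h1, h2⟩ _ h0
  -- independence of 𝓕_t and ξ_{t+1}
  have hIndep : ∀ t : ℕ, Indep (natFiltration ξ t)
      (MeasurableSpace.comap (ξ (t+1)) inferInstance) P := by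
    intro t
    have h_le : ∀ i : {n : ℕ // 1 ≤ n},
        MeasurableSpace.comap (ξ i.1) inferInstance ≤ (inferInstance : MeasurableSpace Ω) :=
      fun i => (hmeas i.1 i.2).comap_le
    have h := indep_biSup_compl h_le hindep.iIndep {i : {n : ℕ // 1 ≤ n} | i.1 ≤ t}
    refine indep_of_indep_of_le_left (indep_of_indep_of_le_right h ?_) ?_
    · exact le_iSup₂ (f := fun (i : {n : ℕ // 1 ≤ n})
        (_ : i ∈ {i : {n : ℕ // 1 ≤ n} | i.1 ≤ t}ᶜ) =>
        MeasurableSpace.comap (ξ i.1) inferInstance)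
        ⟨t+1, Nat.le_add_left 1 t⟩ (by simp)
    · refine iSup₂_le fun s hs => ?_
      exact le_iSup₂ (f := fun (i : {n : ℕ // 1 ≤ n})
        (_ : i ∈ {i : {n : ℕ // 1 ≤ n} | i.1 ≤ t}) =>
        MeasurableSpace.comap (ξ i.1) inferInstance) ⟨s, hs.1⟩ hs.2
  have hprod : ∀ (t : ℕ) (A : Set Ω), MeasurableSet[natFiltration ξ t] A →
      P (A ∩ C (t+1)) = P A * ENNReal.ofReal p := by
    intro t A hA
    rw [(Indep_iff _ _ _).1 (hIndep t) A (C (t+1)) hA ⟨D, hD, rfl⟩,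
      hPC (t+1) (Nat.le_add_left 1 t)]
  have hsetint : ∀ (t : ℕ) (A : Set Ω), MeasurableSet[natFiltration ξ t] A →
      ∫ ω in A ∩ C (t+1), L (ξ (t+1) ω) ∂P = (P A).toReal * β := by
    intro t A hA
    have hAm : MeasurableSet A := hfilt_le t _ hA
    have h1meas : 1 ≤ t + 1 := Nat.le_add_left 1 t
    have hIF : IndepFun (A.indicator (fun _ => (1:ℝ))) (fun ω => g (ξ (t+1) ω)) P := by
      rw [IndepFun_iff_Indep]
      refine indep_of_indep_of_le_left (indep_of_indep_of_le_right (hIndep t) ?_) ?_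
      · rw [show (fun ω => g (ξ (t+1) ω)) = g ∘ ξ (t+1) from rfl, ← MeasurableSpace.comap_comp]
        exact MeasurableSpace.comap_mono hgmeas.comap_le
      · exact Measurable.comap_le (measurable_const.indicator hA)
    have h1 : ∫ ω in A ∩ C (t+1), L (ξ (t+1) ω) ∂P
        = ∫ ω, A.indicator (fun _ => (1:ℝ)) ω * g (ξ (t+1) ω) ∂P := by
      rw [← integral_indicator (hAm.inter (hCmeas _ h1meas))]
      refine integral_congr_ae (Filter.Eventually.of_forall fun ω => ?_)
      show (A ∩ C (t+1)).indicator (fun ω => L (ξ (t+1) ω)) ω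
          = A.indicator (fun _ => (1:ℝ)) ω * g (ξ (t+1) ω)
      rw [hg_comp]
      by_cases hA' : ω ∈ A <;> by_cases hC' : ω ∈ C (t+1) <;>
        simp [Set.indicator_apply, hA', hC']
    have hmul : ∫ ω, A.indicator (fun _ => (1:ℝ)) ω * g (ξ (t+1) ω) ∂P
        = (∫ ω, A.indicator (fun _ => (1:ℝ)) ω ∂P) * ∫ ω, g (ξ (t+1) ω) ∂P := by
      exact hIF.integral_fun_mul_eq_mul_integral ((measurable_const.indicator hAm).aestronglyMeasurable)
        ((hgmeas.comp (hmeas _ h1meas)).aestronglyMeasurable)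
    have hXint : ∫ ω, A.indicator (fun _ => (1:ℝ)) ω ∂P = (P A).toReal := by
      exact integral_indicator_one hAm
    rw [h1, hmul, hXint, hEg (t+1) h1meas]
  have hγp : p⁻¹ = γ := by rw [hp_def]; field_simp
  constructor
  · -- Part (a)
    intro T hT1 hstop hTint hET hpos
    by_contra hcon
    push_neg at hcon
    have hTmeasn : ∀ n, MeasurableSet {ω | T ω = n} := fun n => hfilt_le n _ (hstop n)
    have hTgt : ∀ t : ℕ, MeasurableSet[natFiltration ξ t] {ω | t < T ω} := by
      intro t
      have hset : {ω | t < T ω} = (⋃ s ∈ Finset.range (t+1), {ω | T ω = s})ᶜ := by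
        ext ω
        simp only [Set.mem_setOf_eq, Set.mem_compl_iff, Set.mem_iUnion, Finset.mem_range,
          not_exists, exists_prop, not_and]
        constructor
        · intro h s hs heq; omega
        · intro h; by_contra h'; push_neg at h'; exact h (T ω) (by omega) rfl
      rw [hset]
      refine MeasurableSet.compl ?_
      refine MeasurableSet.biUnion (Finset.range (t+1)).countable_toSet (fun s hs => ?_)
      exact hfilt_mono (Nat.lt_succ_iff.1 (Finset.mem_range.1 hs)) _ (hstop s)
    have hTgtm : ∀ t : ℕ, MeasurableSet {ω | t < T ω} := fun t => hfilt_le t _ (hTgt t)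
    set b : ℕ → ℝ := fun t => (P {ω | t < T ω}).toReal with hb_def
    have hb_pos : ∀ t, 0 < b t :=
      fun t => ENNReal.toReal_pos (hpos t).ne' (measure_ne_top P _)
    have hb0 : b 0 = 1 := by
      have huniv : {ω | 0 < T ω} = Set.univ := Set.eq_univ_of_forall (fun ω => hT1 ω)
      simp [hb_def, huniv]
    have hstep : ∀ t : ℕ, b (t+1) < (1-p) * b t := by
      intro t
      have h1t : 1 ≤ t + 1 := Nat.le_add_left 1 t
      have hratio : β < (∫ ω in {ω | T ω = t + 1}, L (ξ (t + 1) ω) ∂P) / b t := by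
        refine lt_of_lt_of_le hcon ?_
        refine ciInf_le ⟨0, ?_⟩ t
        rintro x ⟨u, rfl⟩
        exact div_nonneg (setIntegral_nonneg (hTmeasn (u+1))
          (fun ω _ => hL0 _)) ENNReal.toReal_nonneg
      have hnum : β * b t < ∫ ω in {ω | T ω = t + 1}, L (ξ (t + 1) ω) ∂P :=
        (lt_div_iff₀ (hb_pos t)).1 hratio
      -- upper bound on the numerator
      set A : Set Ω := {ω | t < T ω} with hA_def
      set B : Set Ω := {ω | T ω = t + 1} with hB_def
      have hAm : MeasurableSet A := hTgtm t
      have hBm : MeasurableSet B := hTmeasn (t+1)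
      have hCm : MeasurableSet (C (t+1)) := hCmeas _ h1t
      have hACm : MeasurableSet (A ∩ C (t+1)) := hAm.inter hCm
      have hLint' := hLints (t+1) h1t
      have hpt : ∀ ω, Set.indicator B (fun ω => L (ξ (t+1) ω)) ω
          ≤ Set.indicator (A ∩ C (t+1)) (fun ω => L (ξ (t+1) ω)) ω
            + ν * (Set.indicator B (fun _ => (1:ℝ)) ω
                 - Set.indicator (A ∩ C (t+1)) (fun _ => (1:ℝ)) ω) := by
        intro ω
        by_cases hB' : ω ∈ B
        · have hAω : ω ∈ A := by
            simp only [hA_def, Set.mem_setOf_eq]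
            have : T ω = t + 1 := hB'
            omega
          by_cases hC' : ω ∈ C (t+1)
          · rw [Set.indicator_of_mem hB', Set.indicator_of_mem (Set.mem_inter hAω hC'),
              Set.indicator_of_mem hB', Set.indicator_of_mem (Set.mem_inter hAω hC')]
            simp
          · have hlt : L (ξ (t+1) ω) < ν := lt_of_not_ge hC'
            rw [Set.indicator_of_mem hB', Set.indicator_of_notMem (fun h => hC' h.2),
              Set.indicator_of_mem hB', Set.indicator_of_notMem (fun h => hC' h.2)]
            simp only [sub_zero, mul_one]
            linarith
        · rw [Set.indicator_of_notMem hB', Set.indicator_of_notMem hB']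
          by_cases hAC : ω ∈ A ∩ C (t+1)
          · rw [Set.indicator_of_mem hAC, Set.indicator_of_mem hAC]
            have hge : ν ≤ L (ξ (t+1) ω) := hAC.2
            simp only [zero_sub, mul_neg, mul_one]
            linarith
          · rw [Set.indicator_of_notMem hAC, Set.indicator_of_notMem hAC]
            simp
      have hint1 : Integrable (fun ω => Set.indicator B (fun ω => L (ξ (t+1) ω)) ω) P := by
        exact hLint'.indicator hBm
      have hF1 : Integrable (fun ω =>
          Set.indicator (A ∩ C (t+1)) (fun ω => L (ξ (t+1) ω)) ω) P := by
        exact hLint'.indicator hACm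
      have hF2 : Integrable (fun ω => Set.indicator B (fun _ => (1:ℝ)) ω) P := by
        exact (integrable_const (1:ℝ)).indicator hBm
      have hF3 : Integrable (fun ω =>
          Set.indicator (A ∩ C (t+1)) (fun _ => (1:ℝ)) ω) P := by
        exact (integrable_const (1:ℝ)).indicator hACm
      have hint2 : Integrable (fun ω =>
          Set.indicator (A ∩ C (t+1)) (fun ω => L (ξ (t+1) ω)) ω
            + ν * (Set.indicator B (fun _ => (1:ℝ)) ω
                 - Set.indicator (A ∩ C (t+1)) (fun _ => (1:ℝ)) ω)) P := by
        exact hF1.add ((hF2.sub hF3).const_mul ν)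
      have hmono := integral_mono hint1 hint2 hpt
      have hACval : (P (A ∩ C (t+1))).toReal = b t * p := by
        rw [hprod t A (hTgt t), ENNReal.toReal_mul, ENNReal.toReal_ofReal hp0.le]
      have hval : ∫ ω, (Set.indicator (A ∩ C (t+1)) (fun ω => L (ξ (t+1) ω)) ω
            + ν * (Set.indicator B (fun _ => (1:ℝ)) ω
                 - Set.indicator (A ∩ C (t+1)) (fun _ => (1:ℝ)) ω)) ∂P
          = b t * β + ν * ((P B).toReal - b t * p) := by
        have hF23 : Integrable (fun ω => ν * (Set.indicator B (fun _ => (1:ℝ)) ω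
            - Set.indicator (A ∩ C (t+1)) (fun _ => (1:ℝ)) ω)) P := by
          exact (hF2.sub hF3).const_mul ν
        have hsub : ∫ ω, (Set.indicator B (fun _ => (1:ℝ)) ω
              - Set.indicator (A ∩ C (t+1)) (fun _ => (1:ℝ)) ω) ∂P
            = (∫ ω, Set.indicator B (fun _ => (1:ℝ)) ω ∂P)
              - ∫ ω, Set.indicator (A ∩ C (t+1)) (fun _ => (1:ℝ)) ω ∂P := by
          exact integral_sub hF2 hF3
        rw [integral_add hF1 hF23, integral_const_mul, hsub]
        have e1 : ∫ ω, Set.indicator (A ∩ C (t+1)) (fun ω => L (ξ (t+1) ω)) ω ∂P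
            = b t * β := by
          rw [integral_indicator hACm]
          exact hsetint t A (hTgt t)
        have e2 : ∫ ω, Set.indicator B (fun _ => (1:ℝ)) ω ∂P = (P B).toReal := by
          rw [integral_indicator hBm]
          simp [measureReal_def]
        have e3 : ∫ ω, Set.indicator (A ∩ C (t+1)) (fun _ => (1:ℝ)) ω ∂P = b t * p := by
          rw [integral_indicator hACm]
          simp only [integral_const, smul_eq_mul, mul_one, Measure.restrict_apply_univ]
          rw [measureReal_def, Measure.restrict_apply_univ]
          exact hACval
        rw [e1, e2, e3]
      rw [hval, integral_indicator hBm] at hmono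
      -- deduce P(B).toReal > p * b t
      have hPB : p * b t < (P B).toReal := by
        by_contra hPB'
        push_neg at hPB'
        have : ∫ ω in B, L (ξ (t + 1) ω) ∂P ≤ b t * β := by
          calc ∫ ω in B, L (ξ (t + 1) ω) ∂P
              ≤ b t * β + ν * ((P B).toReal - b t * p) := hmono
            _ ≤ b t * β := by nlinarith
        rw [hB_def] at this
        nlinarith [hnum]
      -- split the tail
      have hsplit : P A = P B + P {ω | t+1 < T ω} := by
        have hseteq : A = B ∪ {ω | t+1 < T ω} := by
          ext ω
          simp only [hA_def, hB_def, Set.mem_setOf_eq, Set.mem_union]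
          omega
        rw [hseteq, measure_union _ (hTgtm (t+1))]
        rw [Set.disjoint_left]
        intro ω h1 h2
        simp only [hB_def, Set.mem_setOf_eq] at h1 h2
        omega
      have hbt : b t = (P B).toReal + b (t+1) := by
        rw [hb_def]
        simp only
        rw [hsplit, ENNReal.toReal_add (measure_ne_top P _) (measure_ne_top P _)]
      nlinarith
    -- T measurable and summation
    have hTmeas : Measurable T := by
      refine measurable_to_countable' fun n => ?_
      exact hTmeasn n
    have hTtail := tail_lintegral_aux P T hTgtm
    have hsum_ne : ∑' t : ℕ, P {ω | t < T ω} ≠ ⊤ := by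
      rw [← hTtail]
      have h1 : ∫⁻ ω, ((T ω : ℝ≥0∞)) ∂P = ∫⁻ ω, ‖(T ω : ℝ)‖ₑ ∂P := by
        refine lintegral_congr fun ω => ?_
        rw [Real.enorm_eq_ofReal (Nat.cast_nonneg _), ENNReal.ofReal_natCast]
      rw [h1]
      exact hTint.2.ne
    have hint_eq : ∫ ω, (T ω : ℝ) ∂P = ∑' t, b t := by
      rw [integral_eq_lintegral_of_nonneg_ae
        (Filter.Eventually.of_forall fun ω => Nat.cast_nonneg _)
        ((measurable_from_top.comp hTmeas).aestronglyMeasurable)]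
      have h2 : ∫⁻ ω, ENNReal.ofReal ((T ω : ℝ)) ∂P = ∑' t : ℕ, P {ω | t < T ω} := by
        rw [← hTtail]
        exact lintegral_congr fun ω => ENNReal.ofReal_natCast _
      rw [h2, ENNReal.tsum_toReal_eq (fun t => measure_ne_top P _)]
    have hbsum : Summable b := ENNReal.summable_toReal hsum_ne
    have hgeo : ∀ t : ℕ, b (t+1) ≤ b 1 * (1-p)^t := by
      intro t
      induction t with
      | zero => simp
      | succ n ih =>
        have h1 := hstep (n+1)
        have h2 : (1-p) * b (n+1) ≤ (1-p) * (b 1 * (1-p)^n) :=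
          mul_le_mul_of_nonneg_left ih (by linarith)
        calc b (n+2) ≤ (1-p) * b (n+1) := le_of_lt h1
          _ ≤ (1-p) * (b 1 * (1-p)^n) := h2
          _ = b 1 * (1-p)^(n+1) := by ring
    have hb1 : b 1 < 1 - p := by
      have h := hstep 0
      rw [hb0] at h
      linarith
    have hsum_le : ∑' t, b t ≤ 1 + b 1 * p⁻¹ := by
      rw [hbsum.tsum_eq_zero_add, hb0]
      refine add_le_add_right ?_ 1
      have hsg : Summable (fun t : ℕ => b 1 * (1-p)^t) :=
        (summable_geometric_of_lt_one (by linarith) (by linarith)).mul_left _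
      calc ∑' t, b (t+1) ≤ ∑' t : ℕ, b 1 * (1-p)^t :=
            Summable.tsum_le_tsum hgeo ((summable_nat_add_iff 1).mpr hbsum) hsg
        _ = b 1 * ∑' t : ℕ, (1-p)^t := tsum_mul_left
        _ = b 1 * p⁻¹ := by
            rw [tsum_geometric_of_lt_one (by linarith) (by linarith)]
            congr 1
            rw [show (1:ℝ) - (1-p) = p by ring]
    have hfinal : γ ≤ 1 + b 1 * p⁻¹ := le_trans hET (by rw [hint_eq]; exact hsum_le)
    have hip : 0 < p⁻¹ := inv_pos.2 hp0
    have hpp : p * p⁻¹ = 1 := mul_inv_cancel₀ hp0.ne'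
    nlinarith [mul_lt_mul_of_pos_right hb1 hip]
  · -- Part (b)
    set S : Ω → ℕ := shewhart ξ L ν with hS_def
    set A : ℕ → Set Ω := fun t => {ω | ∀ s, 1 ≤ s → s ≤ t → ω ∉ C s} with hA_def
    set N : Set Ω := {ω | ∀ s, 1 ≤ s → ω ∉ C s} with hN_def
    have hE_mem : ∀ ω s, s ∈ {t : ℕ | 1 ≤ t ∧ ν ≤ L (ξ t ω)} ↔ (1 ≤ s ∧ ω ∈ C s) := by
      intro ω s; rfl
    have hS_succ : ∀ t : ℕ, {ω | S ω = t+1} = A t ∩ C (t+1) := by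
      intro t
      ext ω
      simp only [hS_def, shewhart, Set.mem_setOf_eq, Set.mem_inter_iff, hA_def]
      constructor
      · intro h
        have hne : {s : ℕ | 1 ≤ s ∧ ν ≤ L (ξ s ω)}.Nonempty := by
          by_contra hne'
          rw [Set.not_nonempty_iff_eq_empty] at hne'
          rw [hne', Nat.sInf_empty] at h
          omega
        have hmem := Nat.sInf_mem hne
        rw [h] at hmem
        refine ⟨fun s h1 h2 hCs => ?_, hmem.2⟩
        have : sInf {s : ℕ | 1 ≤ s ∧ ν ≤ L (ξ s ω)} ≤ s := Nat.sInf_le ⟨h1, hCs⟩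
        omega
      · rintro ⟨hA', hC'⟩
        have hmem : t + 1 ∈ {s : ℕ | 1 ≤ s ∧ ν ≤ L (ξ s ω)} := ⟨Nat.le_add_left 1 t, hC'⟩
        have hle : sInf {s : ℕ | 1 ≤ s ∧ ν ≤ L (ξ s ω)} ≤ t + 1 := Nat.sInf_le hmem
        have hmem2 := Nat.sInf_mem (Set.nonempty_of_mem hmem)
        rcases hmem2 with ⟨h1, h2⟩
        by_contra hne
        have : sInf {s : ℕ | 1 ≤ s ∧ ν ≤ L (ξ s ω)} ≤ t := by omega
        exact hA' _ h1 this h2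
    have hS_zero : {ω | S ω = 0} = N := by
      ext ω
      simp only [hS_def, shewhart, Set.mem_setOf_eq, hN_def]
      constructor
      · intro h s h1 hCs
        have hne : {s : ℕ | 1 ≤ s ∧ ν ≤ L (ξ s ω)}.Nonempty := ⟨s, h1, hCs⟩
        have hmem := Nat.sInf_mem hne
        rw [h] at hmem
        exact Nat.not_succ_le_zero 0 hmem.1
      · intro h
        have : {s : ℕ | 1 ≤ s ∧ ν ≤ L (ξ s ω)} = ∅ := by
          rw [Set.eq_empty_iff_forall_notMem]
          rintro s ⟨h1, h2⟩
          exact h s h1 h2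
        rw [this, Nat.sInf_empty]
    have hS_gt : ∀ t : ℕ, {ω | t < S ω} = A t \ N := by
      intro t
      ext ω
      simp only [hS_def, shewhart, Set.mem_setOf_eq, Set.mem_diff, hA_def, hN_def]
      constructor
      · intro h
        have hne : {s : ℕ | 1 ≤ s ∧ ν ≤ L (ξ s ω)}.Nonempty := by
          by_contra hne'
          rw [Set.not_nonempty_iff_eq_empty] at hne'
          rw [hne', Nat.sInf_empty] at h
          omega
        obtain ⟨m, hm⟩ := hne
        constructor
        · intro s h1 h2 hCs
          have : sInf {s : ℕ | 1 ≤ s ∧ ν ≤ L (ξ s ω)} ≤ s := Nat.sInf_le ⟨h1, hCs⟩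
          omega
        · intro hN'
          exact hN' m hm.1 hm.2
      · rintro ⟨hA', hN'⟩
        push_neg at hN'
        obtain ⟨s, h1, hCs⟩ := hN'
        have hne : {s : ℕ | 1 ≤ s ∧ ν ≤ L (ξ s ω)}.Nonempty := ⟨s, h1, hCs⟩
        have hmem := Nat.sInf_mem hne
        rcases hmem with ⟨hm1, hm2⟩
        by_contra hle
        push_neg at hle
        exact hA' _ hm1 hle hm2
    -- measurability of A t in the filtration
    have hA_eq : ∀ t : ℕ, A t = ⋂ s ∈ Set.Icc 1 t, (C s)ᶜ := by
      intro t
      ext ω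
      simp only [hA_def, Set.mem_setOf_eq, Set.mem_iInter, Set.mem_Icc, Set.mem_compl_iff]
      constructor
      · intro h s hs; exact h s hs.1 hs.2
      · intro h s h1 h2; exact h s ⟨h1, h2⟩
    have hA_filt : ∀ t : ℕ, MeasurableSet[natFiltration ξ t] (A t) := by
      intro t
      rw [hA_eq t]
      refine MeasurableSet.biInter (Set.to_countable _) fun s hs => ?_
      exact (hC_filt s t hs.1 hs.2).compl
    have hA_meas : ∀ t : ℕ, MeasurableSet (A t) := fun t => hfilt_le t _ (hA_filt t)
    have hN_meas : MeasurableSet N := by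
      have : N = ⋂ s ∈ {s : ℕ | 1 ≤ s}, (C s)ᶜ := by
        ext ω
        simp only [hN_def, Set.mem_setOf_eq, Set.mem_iInter, Set.mem_compl_iff]
      rw [this]
      exact MeasurableSet.biInter (Set.to_countable _) fun s hs => (hCmeas s hs).compl
    -- probability of A t
    set r : ℝ≥0∞ := ENNReal.ofReal (1-p) with hr_def
    have hr1 : r < 1 := by
      rw [hr_def]
      exact ENNReal.ofReal_lt_one.2 (by linarith)
    have hPCc : ∀ s, 1 ≤ s → P ((C s)ᶜ) = r := by
      intro s hs
      rw [measure_compl (hCmeas s hs) (measure_ne_top P _), hPC s hs, measure_univ, hr_def,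
        ENNReal.ofReal_sub 1 hp0.le, ENNReal.ofReal_one]
    have hPA : ∀ t : ℕ, P (A t) = r ^ t := by
      intro t
      have hSfin : A t = ⋂ i ∈ (Finset.Icc 1 t).subtype (fun n => 1 ≤ n), (C i.1)ᶜ := by
        ext ω
        simp only [hA_def, Set.mem_setOf_eq, Set.mem_iInter, Finset.mem_subtype,
          Finset.mem_Icc, Set.mem_compl_iff]
        constructor
        · rintro h ⟨s, h1⟩ hs; exact h s h1 hs.2
        · intro h s h1 h2; exact h ⟨s, h1⟩ ⟨h1, h2⟩
      rw [hSfin, hindep.iIndep.meas_biInter (fun i _ => (show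
          MeasurableSet[MeasurableSpace.comap (ξ i.1) inferInstance] (C i.1)
          from ⟨D, hD, rfl⟩).compl)]
      rw [Finset.prod_congr rfl (fun i _ => hPCc i.1 i.2)]
      rw [Finset.prod_const]
      congr 1
      rw [Finset.card_subtype, Finset.filter_true_of_mem (fun x hx => (Finset.mem_Icc.1 hx).1),
        Nat.card_Icc]
      omega
    have hPN : P N = 0 := by
      have hNsub : ∀ u : ℕ, N ⊆ A u := fun u ω hω s h1 _ => hω s h1
      have hle : ∀ u : ℕ, P N ≤ r ^ u := fun u => (hPA u) ▸ measure_mono (hNsub u)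
      have htend : Filter.Tendsto (fun u : ℕ => r ^ u) Filter.atTop (nhds 0) :=
        ENNReal.tendsto_pow_atTop_nhds_zero_of_lt_one hr1
      exact le_antisymm (ge_of_tendsto' htend hle) zero_le
    have hPS_gt : ∀ t : ℕ, P {ω | t < S ω} = r ^ t := by
      intro t
      rw [hS_gt t, measure_diff_null hPN, hPA t]
    -- S is measurable
    have hS_meas : Measurable S := by
      refine measurable_to_countable' fun n => ?_
      match n with
      | 0 =>
        have : S ⁻¹' {0} = N := by rw [← hS_zero]; rfl
        rw [this]; exact hN_meas
      | (t+1) =>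
        have : S ⁻¹' {t+1} = A t ∩ C (t+1) := by rw [← hS_succ t]; rfl
        rw [this]; exact (hA_meas t).inter (hCmeas _ (Nat.le_add_left 1 t))
    have hSgt_meas : ∀ t : ℕ, MeasurableSet {ω | t < S ω} := by
      intro t
      rw [hS_gt t]
      exact (hA_meas t).diff hN_meas
    have h1mr : 1 - r = ENNReal.ofReal p := by
      rw [hr_def, ENNReal.ofReal_sub 1 hp0.le, ENNReal.ofReal_one,
        ENNReal.sub_sub_cancel ENNReal.one_ne_top (ENNReal.ofReal_le_one.2 hp1.le)]
    constructor
    · -- E[S] = γ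
      rw [integral_eq_lintegral_of_nonneg_ae
        (Filter.Eventually.of_forall fun ω => Nat.cast_nonneg _)
        ((measurable_from_top.comp hS_meas).aestronglyMeasurable)]
      have h2 : ∫⁻ ω, ENNReal.ofReal ((S ω : ℝ)) ∂P = ∑' t : ℕ, P {ω | t < S ω} := by
        rw [← tail_lintegral_aux P S hSgt_meas]
        exact lintegral_congr fun ω => ENNReal.ofReal_natCast _
      rw [h2]
      have h3 : ∑' t : ℕ, P {ω | t < S ω} = (ENNReal.ofReal p)⁻¹ := by
        rw [tsum_congr hPS_gt, ENNReal.tsum_geometric, h1mr]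
      rw [h3, ← ENNReal.ofReal_inv_of_pos hp0, ENNReal.toReal_ofReal (by positivity)]
      exact hγp
    · -- the ratio is β for every t
      intro t
      have h1t : 1 ≤ t + 1 := Nat.le_add_left 1 t
      have hnum : ∫ ω in {ω | S ω = t + 1}, L (ξ (t + 1) ω) ∂P = (P (A t)).toReal * β := by
        rw [show {ω | S ω = t + 1} = A t ∩ C (t+1) from hS_succ t]
        exact hsetint t (A t) (hA_filt t)
      have hden : (P {ω | t < S ω}).toReal = (P (A t)).toReal := by
        rw [hPS_gt t, hPA t]
      have hpos' : (0:ℝ) < (P (A t)).toReal := by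
        rw [hPA t, hr_def, ← ENNReal.ofReal_pow (by linarith : (0:ℝ) ≤ 1 - p),
          ENNReal.toReal_ofReal (pow_nonneg (by linarith) t)]
        exact pow_pos (by linarith) t
      rw [hnum, hden, mul_comm, mul_div_assoc, div_self hpos'.ne', mul_one]
end
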